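/- Let D be a φ-module over K generated by x, and suppose y ∈ D also generates D. Then the minimal skew polynomials χ_{φ,x} and χ_{φ,y} are similar in K[X,σ]: there exists U ∈ K[X,σ] with rgcd(U, χ_{φ,x}) = 1 and llcm(U, χ_{φ,x}) = χ_{φ,y}·U. -/

import Mathlib

/-- Multiplication in the skew polynomial ring `K[X,σ]` with `σ x = x ^ q`, so that
`X * a = a ^ q * X`: `(Σ aᵢXⁱ) ⬝ (Σ bⱼXʲ) = Σ aᵢ bⱼ^(qⁱ) X^(i+j)`.
We use the type `Polynomial K` as the carrier of coefficients. -/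
noncomputable def skewMul {K : Type*} [Field K] (q : ℕ) (P Q : Polynomial K) : Polynomial K :=
  ∑ i ∈ P.support, ∑ j ∈ Q.support,
    Polynomial.C (P.coeff i * Q.coeff j ^ q ^ i) * Polynomial.X ^ (i + j)

/-- Evaluation of a skew polynomial `Σ aᵢ Xⁱ` at a semilinear map `φ`, applied to `x`:
`Σ aᵢ • φ^[i] x`. -/
noncomputable def skewEval {K D : Type*} [Field K] [AddCommGroup D] [Module K D]
    (P : Polynomial K) (φ : D → D) (x : D) : D :=
  ∑ i ∈ P.support, P.coeff i • (φ^[i] x)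

/-- `A` right-divides `B` in `K[X,σ]` (σ x = x^q): `B = C ⬝ A` for some `C`. -/
def SkewRightDvd {K : Type*} [Field K] (q : ℕ) (A B : Polynomial K) : Prop :=
  ∃ C : Polynomial K, B = skewMul q C A

/-- `M` is a left lowest common multiple of `U` and `P` in `K[X,σ]`. -/
def IsLlcm {K : Type*} [Field K] (q : ℕ) (M U P : Polynomial K) : Prop :=
  SkewRightDvd q U M ∧ SkewRightDvd q P M ∧
    ∀ N : Polynomial K, SkewRightDvd q U N → SkewRightDvd q P N → SkewRightDvd q M N

/-- `P` is the minimal (monic, least-degree) skew polynomial annihilating `x`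
under the semilinear map `φ`; equivalently the monic generator of the left ideal
`{Q | Q(φ)(x) = 0}`. -/
def IsMinSkew {K D : Type*} [Field K] [AddCommGroup D] [Module K D]
    (P : Polynomial K) (φ : D → D) (x : D) : Prop :=
  P.Monic ∧ skewEval P φ x = 0 ∧
    ∀ Q : Polynomial K, Q ≠ 0 → skewEval Q φ x = 0 → P.natDegree ≤ Q.natDegree

/-- `P` is irreducible in `K[X,σ]`: nonconstant, and not a product of two skew
polynomials of strictly smaller degree. -/
def IrredSkew {K : Type*} [Field K] (q : ℕ) (P : Polynomial K) : Prop :=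
  0 < P.natDegree ∧ ∀ A B : Polynomial K, P = skewMul q A B →
    ¬(A.natDegree < P.natDegree ∧ B.natDegree < P.natDegree)

/-- Two skew polynomials `P`, `Q` are similar: there is `U` with `rgcd(U,P) = 1`
(every common right divisor of `U` and `P` right-divides `1`) and `llcm(U,P) = Q ⬝ U`. -/
def SkewSimilar {K : Type*} [Field K] (q : ℕ) (P Q : Polynomial K) : Prop :=
  ∃ U : Polynomial K,
    (∀ D : Polynomial K, SkewRightDvd q D U → SkewRightDvd q D P → SkewRightDvd q D 1) ∧
    IsLlcm q (skewMul q Q U) U P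

open Polynomial

section Lemmas
variable {K : Type*} [Field K] {q : ℕ}

theorem skewMul_def' (P Q : Polynomial K) :
    skewMul q P Q = P.sum fun i c => Q.sum fun j d => monomial (i + j) (c * d ^ q ^ i) := by
  unfold skewMul Polynomial.sum
  refine Finset.sum_congr rfl fun i _ => Finset.sum_congr rfl fun j _ => ?_
  rw [C_mul_X_pow_eq_monomial]

theorem skewMul_monomial (hq0 : 0 < q) (i j : ℕ) (c d : K) :
    skewMul q (monomial i c) (monomial j d) = monomial (i + j) (c * d ^ q ^ i) := by
  rw [skewMul_def']
  rw [Polynomial.sum_monomial_index]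
  · rw [Polynomial.sum_monomial_index]
    rw [zero_pow (by positivity), mul_zero, monomial_zero_right]
  · simp [Polynomial.sum]

theorem skewMul_zero_left (Q : Polynomial K) : skewMul q 0 Q = 0 := by
  simp [skewMul_def']

theorem skewMul_zero_right (P : Polynomial K) : skewMul q P 0 = 0 := by
  simp [skewMul_def', Polynomial.sum]

theorem skewMul_add_left (P₁ P₂ Q : Polynomial K) :
    skewMul q (P₁ + P₂) Q = skewMul q P₁ Q + skewMul q P₂ Q := by
  simp only [skewMul_def']
  rw [Polynomial.sum_add_index]
  · intro i
    simp [Polynomial.sum]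
  · intro n b₁ b₂
    simp [Polynomial.sum, add_mul, map_add, Finset.sum_add_distrib]

theorem skewMul_add_right (hq0 : 0 < q)
    (hfr : ∀ (u v : K) (n : ℕ), (u + v) ^ q ^ n = u ^ q ^ n + v ^ q ^ n)
    (P Q₁ Q₂ : Polynomial K) :
    skewMul q P (Q₁ + Q₂) = skewMul q P Q₁ + skewMul q P Q₂ := by
  simp only [skewMul_def']
  rw [← Polynomial.sum_add]
  unfold Polynomial.sum
  refine Finset.sum_congr rfl fun i _ => ?_
  dsimp only
  rw [show (∑ n ∈ (Q₁ + Q₂).support, (monomial (i + n)) (P.coeff i * (Q₁ + Q₂).coeff n ^ q ^ i))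
      = (Q₁ + Q₂).sum fun j d => monomial (i + j) (P.coeff i * d ^ q ^ i) from rfl,
    show (∑ n ∈ Q₁.support, (monomial (i + n)) (P.coeff i * Q₁.coeff n ^ q ^ i))
      = Q₁.sum fun j d => monomial (i + j) (P.coeff i * d ^ q ^ i) from rfl,
    show (∑ n ∈ Q₂.support, (monomial (i + n)) (P.coeff i * Q₂.coeff n ^ q ^ i))
      = Q₂.sum fun j d => monomial (i + j) (P.coeff i * d ^ q ^ i) from rfl,
    Polynomial.sum_add_index]
  · intro j
    rw [zero_pow (by positivity), mul_zero, monomial_zero_right]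
  · intro j d₁ d₂
    rw [hfr, mul_add, map_add]

theorem skewMul_one_right (hq0 : 0 < q) (P : Polynomial K) : skewMul q P 1 = P := by
  have h1 : (1 : Polynomial K) = monomial 0 (1 : K) := by simp
  have hf : (fun (i : ℕ) (c : K) =>
      (monomial 0 (1 : K)).sum fun j d => monomial (i + j) (c * d ^ q ^ i))
      = fun i c => monomial i c := by
    funext i c
    rw [Polynomial.sum_monomial_index _ _ (by rw [zero_pow (by positivity), mul_zero,
      monomial_zero_right])]
    simp
  rw [skewMul_def', h1, hf, Polynomial.sum_monomial_eq]

theorem skewMul_one_left (P : Polynomial K) : skewMul q 1 P = P := by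
  have h1 : (1 : Polynomial K) = monomial 0 (1 : K) := by simp
  rw [skewMul_def', h1, Polynomial.sum_monomial_index]
  · simp only [pow_zero, pow_one, one_mul, Nat.zero_add]
    exact Polynomial.sum_monomial_eq P
  · simp [Polynomial.sum]

theorem skewMul_assoc (hq0 : 0 < q)
    (hfr : ∀ (u v : K) (n : ℕ), (u + v) ^ q ^ n = u ^ q ^ n + v ^ q ^ n)
    (P Q R : Polynomial K) :
    skewMul q (skewMul q P Q) R = skewMul q P (skewMul q Q R) := by
  induction P using Polynomial.induction_on' with
  | add f g hf hg => rw [skewMul_add_left, skewMul_add_left, skewMul_add_left, hf, hg]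
  | monomial i a =>
    induction Q using Polynomial.induction_on' with
    | add f g hf hg =>
      rw [skewMul_add_right hq0 hfr, skewMul_add_left, skewMul_add_left,
        skewMul_add_right hq0 hfr, hf, hg]
    | monomial j b =>
      induction R using Polynomial.induction_on' with
      | add f g hf hg =>
        rw [skewMul_add_right hq0 hfr, skewMul_add_right hq0 hfr,
          skewMul_add_right hq0 hfr, hf, hg]
      | monomial k c =>
        rw [skewMul_monomial hq0, skewMul_monomial hq0, skewMul_monomial hq0,
          skewMul_monomial hq0, add_assoc]
        congr 1
        rw [mul_pow, mul_assoc, pow_add q i j, mul_comm (q ^ i) (q ^ j), pow_mul]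

theorem natDegree_skewMul_le (P Q : Polynomial K) :
    (skewMul q P Q).natDegree ≤ P.natDegree + Q.natDegree := by
  unfold skewMul
  refine Polynomial.natDegree_sum_le_of_forall_le _ _ fun i hi => ?_
  refine Polynomial.natDegree_sum_le_of_forall_le _ _ fun j hj => ?_
  refine le_trans (Polynomial.natDegree_C_mul_le _ _) ?_
  rw [Polynomial.natDegree_X_pow]
  exact Nat.add_le_add (le_natDegree_of_mem_supp i hi) (le_natDegree_of_mem_supp j hj)

theorem coeff_skewMul_top {P Q : Polynomial K} (hP : P ≠ 0) (hQ : Q ≠ 0) :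
    (skewMul q P Q).coeff (P.natDegree + Q.natDegree)
      = P.leadingCoeff * Q.leadingCoeff ^ q ^ P.natDegree := by
  unfold skewMul
  rw [Polynomial.finset_sum_coeff]
  rw [Finset.sum_eq_single P.natDegree]
  · rw [Polynomial.finset_sum_coeff, Finset.sum_eq_single Q.natDegree]
    · rw [Polynomial.coeff_C_mul, Polynomial.coeff_X_pow, if_pos rfl, mul_one]
      rfl
    · intro j hj hne
      rw [Polynomial.coeff_C_mul, Polynomial.coeff_X_pow, if_neg, mul_zero]
      exact fun h => hne (by omega)
    · intro h
      exact absurd (Polynomial.natDegree_mem_support_of_nonzero hQ) h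
  · intro i hi hne
    rw [Polynomial.finset_sum_coeff]
    refine Finset.sum_eq_zero fun j hj => ?_
    rw [Polynomial.coeff_C_mul, Polynomial.coeff_X_pow, if_neg, mul_zero]
    have h1 : i ≤ P.natDegree := le_natDegree_of_mem_supp i hi
    have h2 : j ≤ Q.natDegree := le_natDegree_of_mem_supp j hj
    omega
  · intro h
    exact absurd (Polynomial.natDegree_mem_support_of_nonzero hP) h

theorem skewMul_ne_zero {P Q : Polynomial K} (hP : P ≠ 0) (hQ : Q ≠ 0) :
    skewMul q P Q ≠ 0 := by
  intro h
  have hc := coeff_skewMul_top (q := q) hP hQ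
  rw [h, Polynomial.coeff_zero] at hc
  exact (mul_ne_zero (Polynomial.leadingCoeff_ne_zero.mpr hP)
    (pow_ne_zero _ (Polynomial.leadingCoeff_ne_zero.mpr hQ))) hc.symm

theorem natDegree_skewMul {P Q : Polynomial K} (hP : P ≠ 0) (hQ : Q ≠ 0) :
    (skewMul q P Q).natDegree = P.natDegree + Q.natDegree := by
  refine le_antisymm (natDegree_skewMul_le P Q) ?_
  refine Polynomial.le_natDegree_of_ne_zero ?_
  rw [coeff_skewMul_top hP hQ]
  exact mul_ne_zero (Polynomial.leadingCoeff_ne_zero.mpr hP)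
    (pow_ne_zero _ (Polynomial.leadingCoeff_ne_zero.mpr hQ))

theorem leadingCoeff_skewMul {P Q : Polynomial K} (hP : P ≠ 0) (hQ : Q ≠ 0) :
    (skewMul q P Q).leadingCoeff = P.leadingCoeff * Q.leadingCoeff ^ q ^ P.natDegree := by
  rw [Polynomial.leadingCoeff, natDegree_skewMul hP hQ, coeff_skewMul_top hP hQ]

section Eval
variable {D : Type*} [AddCommGroup D] [Module K D] {φ : D → D}
variable (hadd : ∀ x y : D, φ (x + y) = φ x + φ y)
variable (hsemi : ∀ (c : K) (x : D), φ (c • x) = c ^ q • φ x)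

theorem skewEval_def' (P : Polynomial K) (x : D) :
    skewEval P φ x = P.sum fun i c => c • (φ^[i] x) := rfl

theorem skewEval_zero (x : D) : skewEval (0 : Polynomial K) φ x = 0 := by
  simp [skewEval]

theorem skewEval_monomial (i : ℕ) (c : K) (x : D) :
    skewEval (monomial i c) φ x = c • (φ^[i] x) := by
  rw [skewEval_def', Polynomial.sum_monomial_index]
  exact zero_smul K _

theorem skewEval_add (P Q : Polynomial K) (x : D) :
    skewEval (P + Q) φ x = skewEval P φ x + skewEval Q φ x := by
  rw [skewEval_def', skewEval_def', skewEval_def', Polynomial.sum_add_index]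
  · exact fun i => zero_smul K _
  · exact fun i c d => add_smul c d _

include hadd in
theorem phi_zero : φ 0 = 0 := by
  have := hadd 0 0
  rw [add_zero] at this
  nth_rewrite 1 [← add_zero (φ 0)] at this
  exact (add_left_cancel this).symm

include hadd in
theorem iter_phi_zero (i : ℕ) : φ^[i] (0 : D) = 0 := by
  induction i with
  | zero => rfl
  | succ n ih => rw [Function.iterate_succ_apply', ih, phi_zero hadd]

include hadd in
theorem iter_phi_add (i : ℕ) (u v : D) : φ^[i] (u + v) = φ^[i] u + φ^[i] v := by
  induction i generalizing u v with
  | zero => rfl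
  | succ n ih =>
    rw [Function.iterate_succ_apply', ih, hadd, Function.iterate_succ_apply',
      Function.iterate_succ_apply']

include hsemi in
theorem iter_phi_smul (i : ℕ) (c : K) (v : D) : φ^[i] (c • v) = c ^ q ^ i • φ^[i] v := by
  induction i with
  | zero => simp
  | succ n ih =>
    rw [Function.iterate_succ_apply', ih, hsemi, Function.iterate_succ_apply', ← pow_mul,
      ← pow_succ]

include hadd in
theorem iter_phi_sum {ι : Type*} (s : Finset ι) (f : ι → D) (i : ℕ) :
    φ^[i] (∑ j ∈ s, f j) = ∑ j ∈ s, φ^[i] (f j) := by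
  classical
  induction s using Finset.induction_on with
  | empty => simp [iter_phi_zero hadd]
  | insert _ _ hne ih => rw [Finset.sum_insert hne, Finset.sum_insert hne, iter_phi_add hadd, ih]

theorem skewEval_finset_sum {ι : Type*} (s : Finset ι) (f : ι → Polynomial K) (x : D) :
    skewEval (∑ j ∈ s, f j) φ x = ∑ j ∈ s, skewEval (f j) φ x := by
  classical
  induction s using Finset.induction_on with
  | empty => simp [skewEval_zero]
  | insert _ _ hne ih => rw [Finset.sum_insert hne, Finset.sum_insert hne, skewEval_add, ih]

include hadd hsemi in
theorem skewEval_skewMul (hq0 : 0 < q) (P Q : Polynomial K) (x : D) :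
    skewEval (skewMul q P Q) φ x = skewEval P φ (skewEval Q φ x) := by
  induction P using Polynomial.induction_on' with
  | add f g hf hg => rw [skewMul_add_left, skewEval_add, skewEval_add, hf, hg]
  | monomial i c =>
    rw [skewEval_monomial]
    rw [skewMul_def', Polynomial.sum_monomial_index _ _ (by simp [Polynomial.sum])]
    unfold Polynomial.sum
    rw [skewEval_finset_sum]
    rw [show skewEval Q φ x = ∑ j ∈ Q.support, Q.coeff j • φ^[j] x from rfl,
      iter_phi_sum hadd, Finset.smul_sum]
    refine Finset.sum_congr rfl fun j hj => ?_
    rw [skewEval_monomial, iter_phi_smul hsemi, Function.iterate_add_apply, smul_smul]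

end Eval

theorem skewDiv_monic (hq0 : 0 < q) {B : Polynomial K} (hB : B.Monic) (A : Polynomial K) :
    ∃ Q R : Polynomial K, A = skewMul q Q B + R ∧ R.degree < B.degree := by
  have hB0 : B ≠ 0 := hB.ne_zero
  have hbot : (⊥ : WithBot ℕ) < B.degree :=
    lt_of_le_of_ne bot_le (Ne.symm (by rwa [Ne, Polynomial.degree_eq_bot]))
  suffices H : ∀ n (A : Polynomial K), A.natDegree = n →
      ∃ Q R : Polynomial K, A = skewMul q Q B + R ∧ R.degree < B.degree from
    H A.natDegree A rfl
  intro n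
  induction n using Nat.strong_induction_on with
  | _ n ih =>
    intro A hA
    by_cases hAB : A.degree < B.degree
    · exact ⟨0, A, by rw [skewMul_zero_left, zero_add], hAB⟩
    · push_neg at hAB
      have hA0 : A ≠ 0 := by
        intro h
        rw [h, Polynomial.degree_zero] at hAB
        exact absurd (le_bot_iff.mp hAB) (ne_of_gt hbot)
      have hdB : B.natDegree ≤ A.natDegree := Polynomial.natDegree_le_natDegree hAB
      set c := A.leadingCoeff with hc_def
      have hc : c ≠ 0 := Polynomial.leadingCoeff_ne_zero.mpr hA0
      set m := A.natDegree - B.natDegree with hm_def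
      have hm0 : (monomial m c : Polynomial K) ≠ 0 := by
        rw [Ne, Polynomial.monomial_eq_zero_iff]; exact hc
      set T := skewMul q (monomial m c) B with hT_def
      have hT0 : T ≠ 0 := skewMul_ne_zero hm0 hB0
      have hTdeg : T.natDegree = A.natDegree := by
        classical
        rw [hT_def, natDegree_skewMul hm0 hB0, Polynomial.natDegree_monomial, if_neg hc]
        omega
      have hTlc : T.leadingCoeff = c := by
        rw [hT_def, leadingCoeff_skewMul hm0 hB0, hB.leadingCoeff, one_pow, mul_one,
          Polynomial.leadingCoeff_monomial]
      have hdegeq : A.degree = T.degree := by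
        rw [Polynomial.degree_eq_natDegree hA0, Polynomial.degree_eq_natDegree hT0, hTdeg]
      have hsub : (A - T).degree < A.degree := Polynomial.degree_sub_lt hdegeq hA0 hTlc.symm
      by_cases hR : A - T = 0
      · refine ⟨monomial m c, 0, by rw [add_zero, ← sub_eq_zero, ← hT_def, hR], ?_⟩
        rw [Polynomial.degree_zero]; exact hbot
      · obtain ⟨Q', R, hQR, hRdeg⟩ := ih (A - T).natDegree
          (by rw [← hA]; exact Polynomial.natDegree_lt_natDegree hR hsub) (A - T) rfl
        refine ⟨monomial m c + Q', R, ?_, hRdeg⟩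
        rw [skewMul_add_left, ← hT_def, add_assoc, ← hQR]
        abel

section Module
variable {D : Type*} [AddCommGroup D] [Module K D] {φ : D → D} {x : D}

theorem skewEval_neg (P : Polynomial K) (z : D) : skewEval (-P) φ z = -skewEval P φ z := by
  have h := skewEval_add (φ := φ) (-P) P z
  rw [neg_add_cancel, skewEval_zero] at h
  exact eq_neg_of_add_eq_zero_left h.symm

theorem skewEval_sub (P Q : Polynomial K) (z : D) :
    skewEval (P - Q) φ z = skewEval P φ z - skewEval Q φ z := by
  rw [sub_eq_add_neg, skewEval_add, skewEval_neg, sub_eq_add_neg]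

theorem skewEval_at_zero (hadd : ∀ u v : D, φ (u + v) = φ u + φ v) (P : Polynomial K) :
    skewEval P φ (0 : D) = 0 := by
  unfold skewEval
  refine Finset.sum_eq_zero fun i _ => ?_
  rw [iter_phi_zero hadd, smul_zero]

/-- If all terms of `Q` have degree `< d` and the family `φ^[i] x`, `i < d`, is linearly
independent, then `Q(φ)(x) = 0` forces `Q = 0`. -/
theorem eval_zero_of_lowdeg {d : ℕ}
    (hx : LinearIndependent K (fun i : Fin d => φ^[(i : ℕ)] x))
    {Q : Polynomial K} (hdeg : ∀ i ∈ Q.support, i < d) (h0 : skewEval Q φ x = 0) : Q = 0 := by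
  have hsum : ∑ i : Fin d, Q.coeff (i : ℕ) • φ^[(i : ℕ)] x = 0 := by
    rw [Fin.sum_univ_eq_sum_range (fun i => Q.coeff i • φ^[i] x) d]
    rw [← Finset.sum_subset (fun i hi => Finset.mem_range.mpr (hdeg i hi))
      (fun i _ hi => by rw [Polynomial.notMem_support_iff.mp hi, zero_smul])]
    exact h0
  have hzero := Fintype.linearIndependent_iff.mp hx (fun i => Q.coeff (i : ℕ)) hsum
  ext n
  rcases lt_or_ge n d with h | h
  · exact (hzero ⟨n, h⟩).trans (Polynomial.coeff_zero n).symm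
  · rw [Polynomial.coeff_zero]
    by_contra hc
    exact absurd (hdeg n (Polynomial.mem_support_iff.mpr hc)) (not_lt.mpr h)

end Module
end Lemmas


section Min
open Module
variable {K : Type*} [Field K] {q : ℕ}
variable {D : Type*} [AddCommGroup D] [Module K D] [FiniteDimensional K D] {φ : D → D} {x : D}
variable (hadd : ∀ u v : D, φ (u + v) = φ u + φ v)
variable (hsemi : ∀ (c : K) (u : D), φ (c • u) = c ^ q • φ u)
variable (hx : LinearIndependent K (fun i : Fin (finrank K D) => φ^[(i : ℕ)] x))

include hx in
theorem exists_comb (z : D) :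
    ∃ c : Fin (finrank K D) → K, ∑ i, c i • φ^[(i : ℕ)] x = z := by
  have hspan := hx.span_eq_top_of_card_eq_finrank' (by simp)
  have hz : z ∈ Submodule.span K (Set.range fun i : Fin (finrank K D) => φ^[(i : ℕ)] x) := by
    rw [hspan]; trivial
  exact (Submodule.mem_span_range_iff_exists_fun K).mp hz

/-- evaluation of a sum of monomials built from coefficients -/
theorem skewEval_combo (c : Fin (finrank K D) → K) :
    skewEval (∑ i : Fin (finrank K D), Polynomial.monomial (i : ℕ) (c i)) φ x
      = ∑ i, c i • φ^[(i : ℕ)] x := by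
  rw [skewEval_finset_sum]
  exact Finset.sum_congr rfl fun i _ => skewEval_monomial _ _ _

include hx in
theorem natDegree_minSkew {χ : Polynomial K} (hχ : IsMinSkew χ φ x) :
    χ.natDegree = finrank K D := by
  set d := finrank K D
  refine le_antisymm ?_ ?_
  · -- construct an annihilator of degree ≤ d
    obtain ⟨c, hc⟩ := exists_comb hx (φ^[d] x)
    set S := ∑ i : Fin d, Polynomial.monomial (i : ℕ) (c i) with hS_def
    set P := Polynomial.X ^ d - S with hP_def
    have hSc : S.coeff d = 0 := by
      rw [hS_def, Polynomial.finset_sum_coeff]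
      refine Finset.sum_eq_zero fun i _ => ?_
      rw [Polynomial.coeff_monomial, if_neg (by omega)]
    have hPc : P.coeff d = 1 := by
      rw [hP_def, Polynomial.coeff_sub, Polynomial.coeff_X_pow, if_pos rfl, hSc, sub_zero]
    have hP0 : P ≠ 0 := fun h => by simp [h] at hPc
    have hPdeg : P.natDegree ≤ d := by
      refine le_trans (Polynomial.natDegree_sub_le _ _) ?_
      refine max_le (by rw [Polynomial.natDegree_X_pow]) ?_
      refine Polynomial.natDegree_sum_le_of_forall_le _ _ fun i _ => ?_
      exact le_trans (Polynomial.natDegree_monomial_le _) (le_of_lt i.2)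
    have hPeval : skewEval P φ x = 0 := by
      rw [hP_def, skewEval_sub, skewEval_combo, hc,
        show (Polynomial.X ^ d : Polynomial K) = Polynomial.monomial d 1 by
          rw [← Polynomial.C_mul_X_pow_eq_monomial, Polynomial.C_1, one_mul],
        skewEval_monomial, one_smul, sub_self]
    exact le_trans (hχ.2.2 P hP0 hPeval) hPdeg
  · by_contra h
    push_neg at h
    refine hχ.1.ne_zero (eval_zero_of_lowdeg hx (fun i hi => ?_) hχ.2.1)
    exact lt_of_le_of_lt (Polynomial.le_natDegree_of_mem_supp i hi) h

include hadd hsemi hx in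
theorem minSkew_rightDvd (hq0 : 0 < q) {χ : Polynomial K} (hχ : IsMinSkew χ φ x)
    {N : Polynomial K} (hN : skewEval N φ x = 0) : ∃ S, N = skewMul q S χ := by
  obtain ⟨S, R, hSR, hRdeg⟩ := skewDiv_monic hq0 hχ.1 N
  have hReval : skewEval R φ x = 0 := by
    have := skewEval_add (φ := φ) (skewMul q S χ) R x
    rw [← hSR, hN, skewEval_skewMul hadd hsemi hq0, hχ.2.1, skewEval_at_zero hadd,
      zero_add] at this
    exact this.symm
  have hR0 : R = 0 := by
    rcases eq_or_ne R 0 with h | h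
    · exact h
    refine eval_zero_of_lowdeg hx (fun i hi => ?_) hReval
    have : R.natDegree < χ.natDegree :=
      Polynomial.natDegree_lt_natDegree h hRdeg
    rw [natDegree_minSkew hx hχ] at this
    exact lt_of_le_of_lt (Polynomial.le_natDegree_of_mem_supp i hi) this
  exact ⟨S, by rw [hSR, hR0, add_zero]⟩

end Min


/-- If `x` and `y` both generate the `φ`-module `D`, then the minimal skew
polynomials `χ_{φ,x}` and `χ_{φ,y}` are similar in `K[X,σ]`: there is `U` such that every
common right divisor of `U` and `χ_{φ,x}` right-divides `1`, and
`llcm(U, χ_{φ,x}) = χ_{φ,y} ⬝ U`. -/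
theorem semichar_of_generators_similar (K : Type*) [Field K]
    (p a q : ℕ) (hp : p.Prime) [CharP K p] (ha : 0 < a) (hq : q = p ^ a)
    (hFq : Nat.card {x : K // x ^ q = x} = q)
    (D : Type*) [AddCommGroup D] [Module K D] [FiniteDimensional K D]
    (φ : D → D) (hadd : ∀ x y : D, φ (x + y) = φ x + φ y)
    (hsemi : ∀ (c : K) (x : D), φ (c • x) = c ^ q • φ x)
    (x y : D)
    (hx : LinearIndependent K (fun i : Fin (Module.finrank K D) => φ^[(i : ℕ)] x))
    (hy : LinearIndependent K (fun i : Fin (Module.finrank K D) => φ^[(i : ℕ)] y))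
    (χx χy : Polynomial K) (hχx : IsMinSkew χx φ x) (hχy : IsMinSkew χy φ y) :
    SkewSimilar q χx χy := by
  classical
  haveI := Fact.mk hp
  set d := Module.finrank K D with hd
  have hq0 : 0 < q := by rw [hq]; exact pow_pos hp.pos a
  have hfr : ∀ (u v : K) (n : ℕ), (u + v) ^ q ^ n = u ^ q ^ n + v ^ q ^ n := by
    intro u v n
    rw [hq, ← pow_mul]
    exact add_pow_char_pow u v p (a * n)
  obtain ⟨c, hc⟩ := exists_comb hx y
  set U := ∑ i : Fin d, Polynomial.monomial (i : ℕ) (c i) with hU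
  have hUy : skewEval U φ x = y := by rw [hU, skewEval_combo, hc]
  have hχxd : χx.natDegree = d := natDegree_minSkew hx hχx
  have hχyd : χy.natDegree = d := natDegree_minSkew hy hχy
  have hχx0 : χx ≠ 0 := hχx.1.ne_zero
  refine ⟨U, ?_, ⟨χy, rfl⟩, ?_, ?_⟩
  · -- every common right divisor of U and χx right-divides 1
    rintro E ⟨A, hA⟩ ⟨B, hB⟩
    have hE0 : E ≠ 0 := by rintro rfl; rw [skewMul_zero_right] at hB; exact hχx0 hB
    rcases Nat.eq_zero_or_pos E.natDegree with hEdeg | hEdeg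
    · obtain ⟨e, he, he0⟩ : ∃ e : K, E = Polynomial.C e ∧ e ≠ 0 := by
        refine ⟨E.coeff 0, Polynomial.eq_C_of_natDegree_eq_zero hEdeg, fun h => hE0 ?_⟩
        rw [Polynomial.eq_C_of_natDegree_eq_zero hEdeg, h, map_zero]
      refine ⟨Polynomial.C e⁻¹, ?_⟩
      rw [he, ← Polynomial.monomial_zero_left, ← Polynomial.monomial_zero_left,
        skewMul_monomial hq0, pow_zero, pow_one, inv_mul_cancel₀ he0,
        Polynomial.monomial_zero_left, Polynomial.C_1]
    · exfalso
      have hB0 : B ≠ 0 := by rintro rfl; rw [skewMul_zero_left] at hB; exact hχx0 hB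
      set m := B.natDegree with hm
      have hdm : m + E.natDegree = d := by rw [← hχxd, hB, natDegree_skewMul hB0 hE0]
      have hmd : m < d := by omega
      set z := skewEval E φ x with hz
      have hBz : skewEval B φ z = 0 := by
        rw [hz, ← skewEval_skewMul hadd hsemi hq0, ← hB, hχx.2.1]
      set W := Submodule.span K (Set.range fun i : Fin m => φ^[(i : ℕ)] z) with hW
      have hgen : ∀ i : ℕ, i < m → φ^[i] z ∈ W := fun i hi =>
        Submodule.subset_span ⟨⟨i, hi⟩, rfl⟩
      have hmem : φ^[m] z ∈ W := by
        have hco : B.coeff m ≠ 0 := Polynomial.leadingCoeff_ne_zero.mpr hB0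
        have hms : m ∈ B.support := Polynomial.mem_support_iff.mpr hco
        have hsplit : B.coeff m • φ^[m] z + ∑ i ∈ B.support.erase m, B.coeff i • φ^[i] z
            = 0 := by
          rw [add_comm, Finset.sum_erase_add _ _ hms]
          exact hBz
        have hmz : φ^[m] z
            = (B.coeff m)⁻¹ • (-(∑ i ∈ B.support.erase m, B.coeff i • φ^[i] z)) := by
          rw [← eq_neg_of_add_eq_zero_left hsplit, smul_smul, inv_mul_cancel₀ hco, one_smul]
        rw [hmz]
        refine Submodule.smul_mem _ _ (Submodule.neg_mem _ (Submodule.sum_mem _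
          fun i hi => Submodule.smul_mem _ _ (hgen i ?_)))
        have h1 := Polynomial.le_natDegree_of_mem_supp i (Finset.mem_of_mem_erase hi)
        have h2 := Finset.ne_of_mem_erase hi
        omega
      have hstab : ∀ w ∈ W, φ w ∈ W := by
        intro w hw
        induction hw using Submodule.span_induction with
        | mem w hwmem =>
          obtain ⟨⟨i, hi⟩, rfl⟩ := hwmem
          rw [show φ (φ^[i] z) = φ^[i + 1] z from (Function.iterate_succ_apply' φ i z).symm]
          rcases Nat.lt_or_ge (i + 1) m with h | h
          · exact hgen _ h
          · have : i + 1 = m := by omega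
            rw [this]; exact hmem
        | zero => rw [phi_zero hadd]; exact Submodule.zero_mem _
        | add u v hu hv hpu hpv => rw [hadd]; exact Submodule.add_mem _ hpu hpv
        | smul c u hu hpu => rw [hsemi]; exact Submodule.smul_mem _ _ hpu
      have hiter : ∀ (k : ℕ) (w : D), w ∈ W → φ^[k] w ∈ W := by
        intro k
        induction k with
        | zero => exact fun w hw => hw
        | succ n ih =>
          intro w hw
          rw [Function.iterate_succ_apply']
          exact hstab _ (ih w hw)
      have hallz : ∀ i : ℕ, φ^[i] z ∈ W := by
        intro i
        rcases Nat.lt_or_ge i m with h | h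
        · exact hgen i h
        · have : i = (i - m) + m := by omega
          rw [this, Function.iterate_add_apply]
          exact hiter _ _ hmem
      have hyW : y ∈ W := by
        have hy' : y = skewEval A φ z := by
          rw [hz, ← skewEval_skewMul hadd hsemi hq0, ← hA, hUy]
        rw [hy']
        exact Submodule.sum_mem _ fun i _ => Submodule.smul_mem _ _ (hallz i)
      have hyiW : ∀ i : ℕ, φ^[i] y ∈ W := fun i => hiter i y hyW
      have h1 : Submodule.span K (Set.range fun i : Fin d => φ^[(i : ℕ)] y) ≤ W :=
        Submodule.span_le.mpr (by rintro _ ⟨i, rfl⟩; exact hyiW i)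
      have h2 : d ≤ Module.finrank K W := by
        have := Submodule.finrank_mono h1
        rwa [finrank_span_eq_card hy, Fintype.card_fin] at this
      have h3 : Module.finrank K W ≤ m := by
        have := finrank_range_le_card (R := K) (fun i : Fin m => φ^[(i : ℕ)] z)
        rw [Fintype.card_fin] at this
        exact this
      omega
  · -- χx right-divides χy ⬝ U
    have h0 : skewEval (skewMul q χy U) φ x = 0 := by
      rw [skewEval_skewMul hadd hsemi hq0, hUy, hχy.2.1]
    exact minSkew_rightDvd hadd hsemi hx hq0 hχx h0
  · -- minimality of the llcm
    rintro N ⟨S, hS⟩ ⟨T, hT⟩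
    have hN0 : skewEval N φ x = 0 := by
      rw [hT, skewEval_skewMul hadd hsemi hq0, hχx.2.1, skewEval_at_zero hadd]
    have hSy : skewEval S φ y = 0 := by
      rw [← hUy, ← skewEval_skewMul hadd hsemi hq0, ← hS, hN0]
    obtain ⟨C₁, hC₁⟩ := minSkew_rightDvd hadd hsemi hy hq0 hχy hSy
    exact ⟨C₁, by rw [hS, hC₁, skewMul_assoc hq0 hfr]⟩
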